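/- Let L = ⋃_{k=0}^{m−1}(x_k + Γ) be a point packing generated by lattice Γ ⊆ ℝ^d, R a similarity isometry of L, β ∈ Scal_L(R), and n = [βRΓ : (Γ ∩ βRΓ)]. If 2 ≤ n ≤ m, then there exist distinct indices j_1, j_2 such that x_{j_2} − x_{j_1} ∈ (1/n)Γ. -/

import Mathlib

/-- Corollary 3.3: if 2 ≤ n ≤ m where n = [βRΓ : (Γ ∩ βRΓ)], then two distinct shift
vectors of L differ by an element of (1/n)Γ. -/
theorem stmt9 (d m : ℕ) (hm : 0 < m)
    (Γ : Submodule ℤ (EuclideanSpace ℝ (Fin d)))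
    [DiscreteTopology Γ] [IsZLattice ℝ Γ]
    (x : Fin m → EuclideanSpace ℝ (Fin d))
    (h0 : x ⟨0, hm⟩ = 0)
    (hdist : ∀ k1 k2 : Fin m, k1 ≠ k2 → x k1 - x k2 ∉ Γ)
    (L : Set (EuclideanSpace ℝ (Fin d)))
    (hL : L = ⋃ k : Fin m, (fun γ => x k + γ) '' (Γ : Set (EuclideanSpace ℝ (Fin d))))
    (R : EuclideanSpace ℝ (Fin d) ≃ₗᵢ[ℝ] EuclideanSpace ℝ (Fin d))
    (β : ℝ) (hβ : 0 < β)
    (hsub : (fun v => β • R v) '' L ⊆ L)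
    (n : ℕ)
    (hn : n = Γ.toAddSubgroup.relIndex
      (Γ.map ((β • (R.toLinearEquiv.toLinearMap :
        EuclideanSpace ℝ (Fin d) →ₗ[ℝ] EuclideanSpace ℝ (Fin d))).restrictScalars
        ℤ)).toAddSubgroup)
    (h2n : 2 ≤ n) (hnm : n ≤ m) :
    ∃ j1 j2 : Fin m, j1 ≠ j2 ∧ ∃ γ ∈ Γ, x j2 - x j1 = ((n : ℝ))⁻¹ • γ := by
  set M := ((β • (R.toLinearEquiv.toLinearMap :
      EuclideanSpace ℝ (Fin d) →ₗ[ℝ] EuclideanSpace ℝ (Fin d))).restrictScalars ℤ) with hM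
  set Γ' := Γ.map M with hΓ'
  -- there exists g ∈ Γ' with g ∉ Γ
  have hnotle : ¬ (Γ'.toAddSubgroup ≤ Γ.toAddSubgroup) := by
    intro h
    rw [AddSubgroup.relIndex_eq_one.mpr h] at hn
    omega
  obtain ⟨g, hgΓ', hgΓ⟩ := SetLike.not_le_iff_exists.mp hnotle
  -- n • v ∈ Γ for every v ∈ Γ'
  have key : ∀ v ∈ Γ', n • v ∈ Γ := by
    intro v hv
    have h1 : (Γ.toAddSubgroup.addSubgroupOf Γ'.toAddSubgroup).index = n := hn.symm
    have h2 := AddSubgroup.nsmul_index_mem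
      (Γ.toAddSubgroup.addSubgroupOf Γ'.toAddSubgroup) (⟨v, hv⟩ : Γ'.toAddSubgroup)
    rw [h1, AddSubgroup.mem_addSubgroupOf] at h2
    exact h2
  -- g ∈ L
  have hΓL : (Γ : Set (EuclideanSpace ℝ (Fin d))) ⊆ L := by
    intro v hv
    rw [hL]
    exact Set.mem_iUnion.mpr ⟨⟨0, hm⟩, ⟨v, hv, by simp [h0]⟩⟩
  have hgL : g ∈ L := by
    obtain ⟨γ0, hγ0, rfl⟩ := hgΓ'
    exact hsub ⟨γ0, hΓL hγ0, rfl⟩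
  have hgΓ'' : g ∈ Γ' := hgΓ'
  rw [hL] at hgL
  obtain ⟨j, hj⟩ := Set.mem_iUnion.mp hgL
  obtain ⟨γ', hγ', hgeq0⟩ := hj
  have hgeq : x j + γ' = g := hgeq0
  -- j ≠ 0
  have hj0 : j ≠ ⟨0, hm⟩ := by
    rintro rfl
    rw [h0, zero_add] at hgeq
    exact hgΓ (hgeq ▸ hγ')
  refine ⟨⟨0, hm⟩, j, Ne.symm hj0, n • x j, ?_, ?_⟩
  · have h1 : n • g ∈ Γ := key g hgΓ''
    have h2 : n • γ' ∈ Γ := Submodule.smul_of_tower_mem Γ n hγ'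
    have hx : n • x j = n • g - n • γ' := by
      rw [← hgeq, smul_add]; abel
    rw [hx]
    exact Submodule.sub_mem Γ h1 h2
  · rw [h0, sub_zero]
    have hne : (n : ℝ) ≠ 0 := by positivity
    rw [← Nat.cast_smul_eq_nsmul ℝ n (x j), inv_smul_smul₀ hne]
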